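/- Let $n = -p^k$ for a prime $p$ and $k \geq 1$, write $4n+1 = c^2 d$ with $d$ square-free, and set $\xi = \frac{1+\sqrt{4n+1}}{2}$ and $\omega = \frac{1+\sqrt{d}}{2}$. In the ring of integers $\mathbb{Z}[\omega]$ define the ideals $\mathfrak{p}_1 = (p, \xi)$ and $\mathfrak{p}_2 = (p, \bar{\xi})$ where $\bar{\xi} = \frac{1-\sqrt{4n+1}}{2}$. Then $\mathfrak{p}_1$ and $\mathfrak{p}_2$ are distinct prime ideals, $\mathfrak{p}_1 \mathfrak{p}_2 = (p)$, $\mathfrak{p}_1^k = (\xi)$, and $\mathfrak{p}_2^k = (\bar{\xi})$. In particular $(n) = \mathfrak{p}_1^k \mathfrak{p}_2^k$. -/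

import Mathlib

/-- The ring of integers `ℤ[ω]`, `ω = (1+√d)/2`, realized as `ℤ[X]/(X² - X - (d-1)/4)`. -/
abbrev R9 (d : ℤ) :=
  AdjoinRoot ((Polynomial.X : Polynomial ℤ) ^ 2 - Polynomial.X - Polynomial.C ((d - 1) / 4))

/-- `ω = (1+√d)/2`. -/
noncomputable abbrev omega9 (d : ℤ) : R9 d := AdjoinRoot.root _

/-- `ξ = (1 + √(4n+1))/2 = (1 + c√d)/2 = cω - (c-1)/2` in `ℤ[ω]`. -/
noncomputable abbrev xi9 (c d : ℤ) : R9 d :=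
  (c : R9 d) * omega9 d - (((c - 1) / 2 : ℤ) : R9 d)

lemma monic9 (d : ℤ) : Polynomial.Monic
    ((Polynomial.X : Polynomial ℤ) ^ 2 - Polynomial.X - Polynomial.C ((d - 1) / 4)) := by
  monicity!

lemma omega9_sq (d : ℤ) : (omega9 d)^2 = omega9 d + (((d-1)/4 : ℤ) : R9 d) := by
  have h := AdjoinRoot.mk_self
    (f := (Polynomial.X : Polynomial ℤ) ^ 2 - Polynomial.X - Polynomial.C ((d - 1) / 4))
  simp only [map_sub, map_pow, AdjoinRoot.mk_X, AdjoinRoot.mk_C] at h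
  have : ((AdjoinRoot.of _) ((d-1)/4)) = (((d-1)/4 : ℤ) : R9 d) := (eq_intCast _ _)
  rw [this] at h
  linear_combination h

lemma reg9 (d : ℤ) (t : ℤ) (ht : t ≠ 0) (x : R9 d) (h : (t : R9 d) * x = 0) : x = 0 := by
  have : Module.IsTorsionFree ℤ (R9 d) := (AdjoinRoot.powerBasis' (monic9 d)).basis.isTorsionFree
  have h2 : t • x = 0 := by rwa [zsmul_eq_mul]
  rcases smul_eq_zero.mp h2 with h3 | h3
  · exact absurd h3 ht
  · exact h3

lemma ker_aux (p : ℕ) (hp : p.Prime) (d c g : ℤ) (hpc : ¬ (p:ℤ) ∣ c)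
    (hg : (p:ℤ) ∣ (g^2 - g*c - ((d-1)/4)*c^2)) :
    ∃ φ : R9 d →+* ZMod p,
      RingHom.ker φ = Ideal.span {(p : R9 d), (c : R9 d) * omega9 d - (g : R9 d)} := by
  haveI := Fact.mk hp
  have hc0 : (c : ZMod p) ≠ 0 := by
    rwa [Ne, ZMod.intCast_zmod_eq_zero_iff_dvd]
  set a : ZMod p := (g : ZMod p) * (c : ZMod p)⁻¹ with ha
  have hgz : (g : ZMod p)^2 - (g:ZMod p)*(c:ZMod p) - (((d-1)/4 : ℤ) : ZMod p)*(c:ZMod p)^2 = 0 := by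
    have := (ZMod.intCast_zmod_eq_zero_iff_dvd _ p).mpr hg
    push_cast at this
    linear_combination this
  have heval : Polynomial.eval₂ (Int.castRingHom (ZMod p)) a
      ((Polynomial.X : Polynomial ℤ) ^ 2 - Polynomial.X - Polynomial.C ((d - 1) / 4)) = 0 := by
    simp only [Polynomial.eval₂_sub, Polynomial.eval₂_pow, Polynomial.eval₂_X,
      Polynomial.eval₂_C, Int.coe_castRingHom]
    rw [ha]
    field_simp
    linear_combination hgz
  refine ⟨AdjoinRoot.lift (Int.castRingHom (ZMod p)) a heval, ?_⟩
  set φ := AdjoinRoot.lift (Int.castRingHom (ZMod p)) a heval with hφ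
  have hφω : φ (omega9 d) = a := AdjoinRoot.lift_root heval
  have hle : Ideal.span {(p : R9 d), (c : R9 d) * omega9 d - (g : R9 d)} ≤ RingHom.ker φ := by
    rw [Ideal.span_le]
    rintro x (rfl | rfl)
    · simp [RingHom.mem_ker]
    · simp only [SetLike.mem_coe, RingHom.mem_ker, map_sub, _root_.map_mul, map_intCast, hφω, ha]
      field_simp
      ring
  refine le_antisymm ?_ hle
  obtain ⟨u, v, huv⟩ := ((Nat.prime_iff_prime_int.mp hp).coprime_iff_not_dvd).mpr hpc
  have huvR : (u : R9 d)*(p : R9 d) + (v : R9 d)*(c : R9 d) = 1 := by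
    have := congrArg (fun t : ℤ => (t : R9 d)) huv
    push_cast at this
    exact this
  have claim : ∀ x : R9 d, ∃ t : ℤ,
      x - (t : R9 d) ∈ Ideal.span {(p : R9 d), (c : R9 d) * omega9 d - (g : R9 d)} := by
    intro x
    have hx : x ∈ Algebra.adjoin ℤ ({omega9 d} : Set (R9 d)) := by
      rw [AdjoinRoot.adjoinRoot_eq_top]; trivial
    induction hx using Algebra.adjoin_induction with
    | mem y hy =>
      rcases hy with rfl
      refine ⟨v * g, ?_⟩
      rw [Ideal.mem_span_pair]
      refine ⟨u * omega9 d, v, ?_⟩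
      push_cast
      linear_combination (omega9 d) * huvR
    | algebraMap r => exact ⟨r, by simp⟩
    | add x y hx hy ihx ihy =>
      obtain ⟨t₁, h₁⟩ := ihx; obtain ⟨t₂, h₂⟩ := ihy
      refine ⟨t₁ + t₂, ?_⟩
      have h3 : x + y - ((t₁ + t₂ : ℤ) : R9 d) = (x - t₁) + (y - t₂) := by push_cast; ring
      rw [h3]; exact Ideal.add_mem _ h₁ h₂
    | mul x y hx hy ihx ihy =>
      obtain ⟨t₁, h₁⟩ := ihx; obtain ⟨t₂, h₂⟩ := ihy
      refine ⟨t₁ * t₂, ?_⟩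
      have h3 : x * y - ((t₁ * t₂ : ℤ) : R9 d)
          = x * (y - t₂) + (t₂ : R9 d) * (x - t₁) := by push_cast; ring
      rw [h3]
      exact Ideal.add_mem _ (Ideal.mul_mem_left _ _ h₂) (Ideal.mul_mem_left _ _ h₁)
  intro x hx
  obtain ⟨t, ht⟩ := claim x
  have h1 : φ (x - (t : R9 d)) = 0 := hle ht
  have h2 : φ x = 0 := hx
  have h3 : (p:ℤ) ∣ t := by
    rw [map_sub, h2, map_intCast, zero_sub, neg_eq_zero] at h1
    exact (ZMod.intCast_zmod_eq_zero_iff_dvd t p).mp h1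
  obtain ⟨w, rfl⟩ := h3
  have hmem : ((((p:ℤ) * w : ℤ)) : R9 d)
      ∈ Ideal.span {(p : R9 d), (c : R9 d) * omega9 d - (g : R9 d)} := by
    rw [Ideal.mem_span_pair]
    exact ⟨(w : R9 d), 0, by push_cast; ring⟩
  have h4 := Ideal.add_mem _ ht hmem
  simpa using h4

/-- for `n = -pᵏ`, `4n+1 = c²d` with `d` square-free, the ideals
`𝔭₁ = (p, ξ)` and `𝔭₂ = (p, ξ̄)` of `ℤ[ω]` (where `ξ̄ = 1 - ξ`) are distinct primes with
`𝔭₁𝔭₂ = (p)`, `𝔭₁ᵏ = (ξ)`, `𝔭₂ᵏ = (ξ̄)`, so `(n) = 𝔭₁ᵏ 𝔭₂ᵏ`. -/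
theorem stmt9 (p : ℕ) (hp : p.Prime) (k : ℕ) (hk : 1 ≤ k) (n c d : ℤ)
    (hn : n = -(p : ℤ) ^ k) (hcd : 4 * n + 1 = c ^ 2 * d) (hd : Squarefree d) (hc : 0 < c) :
    (Ideal.span {(p : R9 d), xi9 c d}).IsPrime ∧
    (Ideal.span {(p : R9 d), 1 - xi9 c d}).IsPrime ∧
    Ideal.span {(p : R9 d), xi9 c d} ≠ Ideal.span {(p : R9 d), 1 - xi9 c d} ∧
    Ideal.span {(p : R9 d), xi9 c d} * Ideal.span {(p : R9 d), 1 - xi9 c d} =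
      Ideal.span {(p : R9 d)} ∧
    Ideal.span {(p : R9 d), xi9 c d} ^ k = Ideal.span {xi9 c d} ∧
    Ideal.span {(p : R9 d), 1 - xi9 c d} ^ k = Ideal.span {1 - xi9 c d} ∧
    Ideal.span {(n : R9 d)} =
      Ideal.span {(p : R9 d), xi9 c d} ^ k * Ideal.span {(p : R9 d), 1 - xi9 c d} ^ k := by
  haveI := Fact.mk hp
  -- integer arithmetic setup
  obtain ⟨e, he⟩ : ∃ e, c = 2*e + 1 := by
    rcases Int.even_or_odd c with ⟨t, ht⟩ | ⟨t, ht⟩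
    · exfalso
      have h2 : 4*n + 1 = 4*(t^2*d) := by rw [hcd, ht]; ring
      omega
    · exact ⟨t, ht⟩
  obtain ⟨m, hm⟩ : ∃ m, d = 4*m + 1 := by
    refine ⟨n - d*(e^2+e), ?_⟩
    linear_combination -hcd - d*(c + 2*e + 1)*he
  have he2 : (c-1)/2 = e := by omega
  have hm2 : (d-1)/4 = m := by omega
  have hI1 : e^2 - e*c - m*c^2 = (p:ℤ)^k := by
    have h4 : 4*(e^2 - e*c - m*c^2) = 4*((p:ℤ)^k) := by
      linear_combination hcd + (c - 2*e + 1)*he + c^2*hm - 4*hn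
    linarith
  have hI2 : e^2 + e + m*c^2 = n := by
    have h4 : 4*(e^2 + e + m*c^2) = 4*n := by
      linear_combination -hcd - (c + 2*e + 1)*he - c^2*hm
    linarith
  have hpc : ¬ (p:ℤ) ∣ c := by
    intro h
    have h1 : (p:ℤ) ∣ 4*n + 1 := by
      rw [hcd]; exact dvd_mul_of_dvd_left (dvd_pow h two_ne_zero) d
    have h2 : (p:ℤ) ∣ n := by
      rw [hn]; exact ((dvd_pow_self (p:ℤ) (by omega : k ≠ 0))).neg_right
    have h3 : (p:ℤ) ∣ 1 := by
      have := h1.sub (h2.mul_left 4)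
      simpa using this
    have := Int.le_of_dvd one_pos h3
    have := hp.two_le
    omega
  obtain ⟨j, rfl⟩ : ∃ j, k = j + 1 := ⟨k - 1, by omega⟩
  set k := j + 1 with hkj
  -- ring-level identities
  set ω := omega9 d with hω
  set ξ := xi9 c d with hξ
  have hωsq : ω^2 = ω + (m : R9 d) := by rw [hω, ← hm2]; exact omega9_sq d
  have hxiE : ξ = (c : R9 d) * ω - (e : R9 d) := by rw [hξ, hω]; show _ = _; rw [← he2]
  have hceR : (c : R9 d) = 2*(e : R9 d) + 1 := by
    have := congrArg (fun t : ℤ => (t : R9 d)) he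
    push_cast at this; exact this
  have hI2R : ((e:R9 d))^2 + (e:R9 d) + (m:R9 d)*(c:R9 d)^2 = -((p:R9 d))^k := by
    have := congrArg (fun t : ℤ => (t : R9 d)) (hI2.trans hn)
    push_cast at this; exact this
  have hxx : ξ * (1 - ξ) = (p : R9 d)^k := by
    rw [hxiE]
    linear_combination (-(c:R9 d)^2) * hωsq + (-(c:R9 d) * ω) * hceR + (-1 : R9 d) * hI2R
  -- membership basics
  have hpP1 : (p : R9 d) ∈ Ideal.span {(p : R9 d), ξ} := Ideal.subset_span (Set.mem_insert _ _)
  have hxiP1 : ξ ∈ Ideal.span {(p : R9 d), ξ} := Ideal.subset_span (Set.mem_insert_of_mem _ rfl)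
  have hpP2 : (p : R9 d) ∈ Ideal.span {(p : R9 d), 1 - ξ} := Ideal.subset_span (Set.mem_insert _ _)
  have hxiP2 : 1 - ξ ∈ Ideal.span {(p : R9 d), 1 - ξ} :=
    Ideal.subset_span (Set.mem_insert_of_mem _ rfl)
  -- primality
  have hprime1 : (Ideal.span {(p : R9 d), ξ}).IsPrime := by
    obtain ⟨φ, hφ⟩ := ker_aux p hp d c e hpc (by rw [hm2, hI1]; exact dvd_pow_self _ (by omega))
    have hEq : Ideal.span {(p : R9 d), ξ} = RingHom.ker φ := by
      rw [hφ, hxiE, hω]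
    rw [hEq]
    exact RingHom.ker_isPrime φ
  have hprime2 : (Ideal.span {(p : R9 d), 1 - ξ}).IsPrime := by
    have hg2 : (p:ℤ) ∣ ((e+1)^2 - (e+1)*c - ((d-1)/4)*c^2) := by
      rw [hm2]
      have : (e+1)^2 - (e+1)*c - m*c^2 = (p:ℤ)^k := by linear_combination hI1 - he
      rw [this]; exact dvd_pow_self _ (by omega)
    obtain ⟨φ, hφ⟩ := ker_aux p hp d c (e+1) hpc hg2
    have hspan2 : Ideal.span {(p : R9 d), 1 - ξ}
        = Ideal.span {(p : R9 d), (c : R9 d) * ω - ((e+1 : ℤ) : R9 d)} := by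
      have h1ξ : (1 : R9 d) - ξ = -((c : R9 d) * ω - ((e+1 : ℤ) : R9 d)) := by
        rw [hxiE]; push_cast; ring
      rw [Ideal.span_insert, Ideal.span_insert, h1ξ, Ideal.span_singleton_neg]
    rw [hspan2, hω, ← hφ]
    exact RingHom.ker_isPrime φ
  -- distinctness
  have hne : Ideal.span {(p : R9 d), ξ} ≠ Ideal.span {(p : R9 d), 1 - ξ} := by
    intro h
    have h2 : 1 - ξ ∈ Ideal.span {(p : R9 d), ξ} := h ▸ hxiP2
    have h3 : (1 : R9 d) ∈ Ideal.span {(p : R9 d), ξ} := by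
      have := Ideal.add_mem _ hxiP1 h2
      simpa using this
    exact hprime1.ne_top ((Ideal.eq_top_iff_one _).mpr h3)
  -- product is (p)
  have hProd : Ideal.span {(p : R9 d), ξ} * Ideal.span {(p : R9 d), 1 - ξ}
      = Ideal.span {(p : R9 d)} := by
    apply le_antisymm
    · rw [Ideal.mul_le]
      intro r hr s hs
      rw [Ideal.mem_span_pair] at hr hs
      obtain ⟨a, b, rfl⟩ := hr; obtain ⟨a', b', rfl⟩ := hs
      rw [Ideal.mem_span_singleton]
      exact ⟨a*a'*(p : R9 d) + a*b'*(1 - ξ) + b*a'*ξ + b*b'*(p : R9 d)^j,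
        by linear_combination (b*b')*hxx⟩
    · rw [Ideal.span_singleton_le_iff_mem]
      have h1 := Ideal.mul_mem_mul hpP1 hxiP2
      have h2 := Ideal.mul_mem_mul hxiP1 hpP2
      have h3 : (p : R9 d) = (p : R9 d)*(1-ξ) + ξ*(p : R9 d) := by ring
      have h4 := Ideal.add_mem _ h1 h2
      rwa [← h3] at h4
  -- powers: generic upper bound
  have hpow : ∀ (z : R9 d) (i : ℕ),
      Ideal.span {(p : R9 d), z} ^ (i+1) ≤ Ideal.span {z, (p : R9 d)^(i+1)} := by
    intro z i
    induction i with
    | zero =>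
      rw [pow_one]
      rw [Ideal.span_le]
      rintro x (rfl | rfl)
      · rw [SetLike.mem_coe, Ideal.mem_span_pair]; exact ⟨0, 1, by ring⟩
      · rw [SetLike.mem_coe, Ideal.mem_span_pair]; exact ⟨1, 0, by ring⟩
    | succ i ih =>
      calc Ideal.span {(p : R9 d), z} ^ (i+2)
          = Ideal.span {(p : R9 d), z} ^ (i+1) * Ideal.span {(p : R9 d), z} := pow_succ _ _
        _ ≤ Ideal.span {z, (p : R9 d)^(i+1)} * Ideal.span {(p : R9 d), z} :=
            Ideal.mul_mono_left ih
        _ ≤ Ideal.span {z, (p : R9 d)^(i+2)} := by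
            rw [Ideal.mul_le]
            intro r hr s hs
            rw [Ideal.mem_span_pair] at hr hs
            obtain ⟨a, b, rfl⟩ := hr; obtain ⟨a', b', rfl⟩ := hs
            rw [Ideal.mem_span_pair]
            exact ⟨a*(a'*(p:R9 d) + b'*z) + b*b'*(p:R9 d)^(i+1), b*a', by ring⟩
  have hP1k_le : Ideal.span {(p : R9 d), ξ} ^ k ≤ Ideal.span {ξ} := by
    refine (hpow ξ j).trans ?_
    rw [Ideal.span_le]
    rintro x (rfl | rfl)
    · exact Ideal.mem_span_singleton_self _
    · rw [SetLike.mem_coe, Ideal.mem_span_singleton]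
      exact ⟨1 - ξ, hxx.symm⟩
  have hP2k_le : Ideal.span {(p : R9 d), 1 - ξ} ^ k ≤ Ideal.span {1 - ξ} := by
    refine (hpow (1-ξ) j).trans ?_
    rw [Ideal.span_le]
    rintro x (rfl | rfl)
    · exact Ideal.mem_span_singleton_self _
    · rw [SetLike.mem_coe, Ideal.mem_span_singleton]
      exact ⟨ξ, by linear_combination -hxx⟩
  -- cancellation
  have hPk0 : ((p:ℤ)^k) ≠ 0 := pow_ne_zero _ (by exact_mod_cast hp.ne_zero)
  have hcancel : ∀ (z w : R9 d) (I J : Ideal (R9 d)), z * w = (p : R9 d)^k →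
      Ideal.span {z} * I = Ideal.span {z} * J → I = J := by
    have hle : ∀ (z w : R9 d) (I J : Ideal (R9 d)), z * w = (p : R9 d)^k →
        Ideal.span {z} * I = Ideal.span {z} * J → I ≤ J := by
      intro z w I J hzw heq x hx
      have h1 : z * x ∈ Ideal.span {z} * J := by
        rw [← heq]
        exact Ideal.mul_mem_mul (Ideal.mem_span_singleton_self z) hx
      rw [Ideal.mem_span_singleton_mul] at h1
      obtain ⟨y, hyJ, hyx⟩ := h1
      have h2 : (((p:ℤ)^k : ℤ) : R9 d) * (x - y) = 0 := by
        push_cast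
        linear_combination w * hyx.symm - (x - y) * hzw
      have h3 := reg9 d _ hPk0 _ h2
      have h4 : x = y := by linear_combination h3
      rw [h4]; exact hyJ
    intro z w I J hzw heq
    exact le_antisymm (hle z w I J hzw heq) (hle z w J I hzw heq.symm)
  -- compute the products both ways
  have hchain : Ideal.span {ξ} * Ideal.span {1 - ξ}
      = Ideal.span {(p : R9 d), ξ} ^ k * Ideal.span {(p : R9 d), 1 - ξ} ^ k := by
    rw [Ideal.span_singleton_mul_span_singleton, hxx, ← Ideal.span_singleton_pow, ← hProd,
      mul_pow]
  have hP2k : Ideal.span {(p : R9 d), 1 - ξ} ^ k = Ideal.span {1 - ξ} := by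
    refine hcancel ξ (1 - ξ) _ _ hxx ?_
    apply le_antisymm
    · exact Ideal.mul_mono_right hP2k_le
    · calc Ideal.span {ξ} * Ideal.span {1 - ξ}
          = Ideal.span {(p : R9 d), ξ} ^ k * Ideal.span {(p : R9 d), 1 - ξ} ^ k := hchain
        _ ≤ Ideal.span {ξ} * Ideal.span {(p : R9 d), 1 - ξ} ^ k := Ideal.mul_mono_left hP1k_le
  have hP1k : Ideal.span {(p : R9 d), ξ} ^ k = Ideal.span {ξ} := by
    refine hcancel (1 - ξ) ξ _ _ (by linear_combination hxx) ?_
    apply le_antisymm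
    · exact Ideal.mul_mono_right hP1k_le
    · calc Ideal.span {1 - ξ} * Ideal.span {ξ}
          = Ideal.span {ξ} * Ideal.span {1 - ξ} := mul_comm _ _
        _ = Ideal.span {(p : R9 d), ξ} ^ k * Ideal.span {(p : R9 d), 1 - ξ} ^ k := hchain
        _ = Ideal.span {(p : R9 d), 1 - ξ} ^ k * Ideal.span {(p : R9 d), ξ} ^ k := mul_comm _ _
        _ ≤ Ideal.span {1 - ξ} * Ideal.span {(p : R9 d), ξ} ^ k := Ideal.mul_mono_left hP2k_le
  refine ⟨hprime1, hprime2, hne, hProd, hP1k, hP2k, ?_⟩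
  rw [hP1k, hP2k, Ideal.span_singleton_mul_span_singleton, hxx]
  have hnR : (n : R9 d) = -((p : R9 d)^k) := by
    have := congrArg (fun t : ℤ => (t : R9 d)) hn
    push_cast at this; exact this
  rw [hnR, ← Ideal.span_singleton_neg ((p : R9 d)^k)]
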